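/- Let A, B: U → ℍ \ {0} be smooth on an open set U ⊂ ℂ, and suppose there is a complex-valued function h with (∂z\∂A)·A⁻¹ = −h j and (∂z̄\∂B)·B⁻¹ = h j (where ∂z\∂A = (A_x − i A_y)/2 and ∂z̄\∂B = (B_x + i B_y)/2, with i ∈ ℍ multiplying on the left). Then the ℍ-valued 1-form ξ = Ā dz B = Ā B dx + Ā i B dy is closed. -/

import Mathlib

def qi : Quaternion ℝ := ⟨0, 1, 0, 0⟩
def qj : Quaternion ℝ := ⟨0, 0, 1, 0⟩
def cq (z : ℂ) : Quaternion ℝ := ⟨z.re, z.im, 0, 0⟩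

instance : StarModule ℝ (Quaternion ℝ) :=
  ⟨fun r a => by ext <;> simp⟩

set_option maxHeartbeats 1000000 in
lemma key (a ay b b' : Quaternion ℝ) (c : ℂ) :
    star (qi * ay - (2:ℝ) • (cq c * qj * a)) * qi * b
      + star a * qi * ((2:ℝ) • (cq c * qj * b) - qi * b')
      = star ay * b + star a * b' := by
  have e : qi.re = 0 ∧ qi.imI = 1 ∧ qi.imJ = 0 ∧ qi.imK = 0 ∧ qj.re = 0 ∧ qj.imI = 0 ∧
      qj.imJ = 1 ∧ qj.imK = 0 ∧ (cq c).re = c.re ∧ (cq c).imI = c.im ∧ (cq c).imJ = 0 ∧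
      (cq c).imK = 0 := ⟨rfl, rfl, rfl, rfl, rfl, rfl, rfl, rfl, rfl, rfl, rfl, rfl⟩
  obtain ⟨e1, e2, e3, e4, e5, e6, e7, e8, e9, e10, e11, e12⟩ := e
  ext <;>
    simp [e1, e2, e3, e4, e5, e6, e7, e8, e9, e10, e11, e12, Quaternion.ext_iff, Quaternion.re_mul, Quaternion.imI_mul,
      Quaternion.imJ_mul, Quaternion.imK_mul, Quaternion.re_smul, Quaternion.imI_smul,
      Quaternion.imJ_smul, Quaternion.imK_smul] <;>
    ring

theorem KT_dirac_implies_closed (U : Set (ℝ × ℝ)) (hU : IsOpen U)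
    (A B : ℝ × ℝ → Quaternion ℝ) (h : ℝ × ℝ → ℂ)
    (hA : ContDiffOn ℝ 2 A U) (hB : ContDiffOn ℝ 2 B U)
    (hAne : ∀ p ∈ U, A p ≠ 0) (hBne : ∀ p ∈ U, B p ≠ 0)
    (hDiracA : ∀ p ∈ U,
      (((1 : ℝ) / 2) • (fderiv ℝ A p (1, 0) - qi * fderiv ℝ A p (0, 1))) * (A p)⁻¹
        = -(cq (h p)) * qj)
    (hDiracB : ∀ p ∈ U,
      (((1 : ℝ) / 2) • (fderiv ℝ B p (1, 0) + qi * fderiv ℝ B p (0, 1))) * (B p)⁻¹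
        = cq (h p) * qj) :
    ∀ p ∈ U,
      fderiv ℝ (fun q => star (A q) * qi * B q) p (1, 0)
        = fderiv ℝ (fun q => star (A q) * B q) p (0, 1) := by
  intro p hp
  have hmem := hU.mem_nhds hp
  have hAd : DifferentiableAt ℝ A p :=
    (hA.contDiffAt hmem).differentiableAt (by norm_num)
  have hBd : DifferentiableAt ℝ B p :=
    (hB.contDiffAt hmem).differentiableAt (by norm_num)
  set A' := fderiv ℝ A p with hA'
  set B' := fderiv ℝ B p with hB'
  have hAp : HasFDerivAt A A' p := hAd.hasFDerivAt
  have hBp : HasFDerivAt B B' p := hBd.hasFDerivAt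
  have hstarA : HasFDerivAt (fun q => star (A q))
      (((starL' ℝ : Quaternion ℝ ≃L[ℝ] Quaternion ℝ) :
        Quaternion ℝ →L[ℝ] Quaternion ℝ).comp A') p :=
    ((starL' ℝ : Quaternion ℝ ≃L[ℝ] Quaternion ℝ).toContinuousLinearMap.hasFDerivAt).comp p hAp
  -- Dirac relations rearranged
  have hAx : A' (1, 0) = qi * A' (0, 1) - (2:ℝ) • (cq (h p) * qj * A p) := by
    have h1 := hDiracA p hp
    have h2 := congrArg (· * A p) h1
    simp only [mul_assoc, inv_mul_cancel₀ (hAne p hp), mul_one] at h2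
    have h3 : A' (1, 0) - qi * A' (0, 1) = (2:ℝ) • (-cq (h p) * (qj * A p)) := by
      rw [← h2, smul_smul]; norm_num; rfl
    rw [sub_eq_iff_eq_add] at h3
    rw [h3]
    simp only [neg_mul, smul_neg, mul_assoc]
    abel
  have hBx : B' (1, 0) = (2:ℝ) • (cq (h p) * qj * B p) - qi * B' (0, 1) := by
    have h1 := hDiracB p hp
    have h2 := congrArg (· * B p) h1
    simp only [mul_assoc, inv_mul_cancel₀ (hBne p hp), mul_one] at h2
    have h3 : B' (1, 0) + qi * B' (0, 1) = (2:ℝ) • (cq (h p) * (qj * B p)) := by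
      rw [← h2, smul_smul]; norm_num; rfl
    rw [eq_sub_iff_add_eq]
    simpa only [mul_assoc] using h3
  have hf1 : HasFDerivAt (fun q => star (A q) * qi * B q)
      ((star (A p) * qi) • B' +
        ((((starL' ℝ : Quaternion ℝ ≃L[ℝ] Quaternion ℝ) :
          Quaternion ℝ →L[ℝ] Quaternion ℝ).comp A').smulRight qi).smulRight (B p)) p :=
    (hstarA.mul_const' qi).mul' hBp
  have hf2 : HasFDerivAt (fun q => star (A q) * B q)
      (star (A p) • B' +
        (((starL' ℝ : Quaternion ℝ ≃L[ℝ] Quaternion ℝ) :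
          Quaternion ℝ →L[ℝ] Quaternion ℝ).comp A').smulRight (B p)) p :=
    hstarA.mul' hBp
  rw [hf1.fderiv, hf2.fderiv]
  simp only [ContinuousLinearMap.add_apply, ContinuousLinearMap.smul_apply,
    ContinuousLinearMap.smulRight_apply, ContinuousLinearMap.comp_apply,
    ContinuousLinearEquiv.coe_coe, starL'_apply, smul_eq_mul]
  rw [hAx, hBx]
  have := key (A p) (A' (0, 1)) (B p) (B' (0, 1)) (h p)
  rw [add_comm] at this
  exact this.trans (add_comm _ _)
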